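/- Let A and Â be n×n real symmetric positive semidefinite matrices such that E = A − Â is positive semidefinite, let μ > 0, and let b ∈ ℝ^n be nonzero. Define x⋆ = (A + μI)⁻¹ b and x̂ = (Â + μI)⁻¹ b. Then ‖x̂ − x⋆‖₂ / ‖x⋆‖₂ ≤ ‖E‖ / μ, where ‖E‖ is the spectral norm of E. -/

import Mathlib

open Matrix MeasureTheory ProbabilityTheory
open scoped Classical

/-- Moore–Penrose pseudoinverse (characterized by the four Penrose conditions). -/
noncomputable def pinv {m n : ℕ} (A : Matrix (Fin m) (Fin n) ℝ) : Matrix (Fin n) (Fin m) ℝ :=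
  if h : ∃ B : Matrix (Fin n) (Fin m) ℝ,
      A * B * A = A ∧ B * A * B = B ∧ (A * B)ᵀ = A * B ∧ (B * A)ᵀ = B * A
  then h.choose else 0

/-- Nyström approximation of `A` with respect to the test matrix `X`. -/
noncomputable def nystrom {n l : ℕ} (A : Matrix (Fin n) (Fin n) ℝ)
    (X : Matrix (Fin n) (Fin l) ℝ) : Matrix (Fin n) (Fin n) ℝ :=
  A * X * pinv (Xᵀ * A * X) * (A * X)ᵀ

/-- Spectral (ℓ² operator) norm of a matrix. -/
noncomputable def specNorm {m n : ℕ} (M : Matrix (Fin m) (Fin n) ℝ) : ℝ :=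
  ‖LinearMap.toContinuousLinearMap (Matrix.toEuclideanLin M)‖

/-- Frobenius norm of a matrix. -/
noncomputable def frobNorm {m n : ℕ} (M : Matrix (Fin m) (Fin n) ℝ) : ℝ :=
  Real.sqrt (∑ i, ∑ j, (M i j) ^ 2)

/-- Euclidean norm of a vector. -/
noncomputable def euclNorm {n : ℕ} (x : Fin n → ℝ) : ℝ :=
  Real.sqrt (∑ i, (x i) ^ 2)

/-- Law of an `n × l` random matrix with independent standard normal entries. -/
noncomputable def gaussianEnsemble (n l : ℕ) : Measure (Fin n → Fin l → ℝ) :=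
  Measure.pi fun _ => Measure.pi fun _ => gaussianReal 0 1

/-- The psd square root of a psd matrix (junk value `0` otherwise). -/
noncomputable def matSqrt {n : ℕ} (M : Matrix (Fin n) (Fin n) ℝ) : Matrix (Fin n) (Fin n) ℝ :=
  if hM : M.PosSemidef then
    (hM.1.eigenvectorUnitary : Matrix (Fin n) (Fin n) ℝ) *
      diagonal (Real.sqrt ∘ hM.1.eigenvalues) *
      (star (hM.1.eigenvectorUnitary : Matrix (Fin n) (Fin n) ℝ))
  else 0

/-- ℓ² condition number of a symmetric matrix: ratio of the largest to the smallest
eigenvalue (junk value `0` for non-symmetric matrices). -/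
noncomputable def kappa {n : ℕ} (M : Matrix (Fin n) (Fin n) ℝ) : ℝ :=
  if hM : M.IsHermitian then (⨆ i, hM.eigenvalues i) / (⨅ i, hM.eigenvalues i) else 0

lemma euclNorm_eq {n : ℕ} (x : Fin n → ℝ) :
    euclNorm x = ‖(WithLp.equiv 2 (Fin n → ℝ)).symm x‖ := by
  simp [euclNorm, EuclideanSpace.norm_eq, Real.norm_eq_abs, sq_abs]

lemma euclNorm_nonneg {n : ℕ} (x : Fin n → ℝ) : 0 ≤ euclNorm x :=
  Real.sqrt_nonneg _

lemma euclNorm_pos {n : ℕ} {x : Fin n → ℝ} (hx : x ≠ 0) : 0 < euclNorm x := by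
  rw [euclNorm_eq]; simpa using hx

lemma euclNorm_mulVec_le {m n : ℕ} (M : Matrix (Fin m) (Fin n) ℝ) (v : Fin n → ℝ) :
    euclNorm (M *ᵥ v) ≤ specNorm M * euclNorm v := by
  rw [euclNorm_eq, euclNorm_eq]
  exact (LinearMap.toContinuousLinearMap (Matrix.toEuclideanLin M)).le_opNorm _

lemma dotProduct_le {n : ℕ} (y w : Fin n → ℝ) :
    y ⬝ᵥ w ≤ euclNorm y * euclNorm w := by
  rw [euclNorm_eq, euclNorm_eq]
  have := real_inner_le_norm ((WithLp.equiv 2 (Fin n → ℝ)).symm y)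
    ((WithLp.equiv 2 (Fin n → ℝ)).symm w)
  rw [PiLp.inner_apply] at this
  simpa [dotProduct, mul_comm] using this

lemma dotProduct_self_eq {n : ℕ} (y : Fin n → ℝ) : y ⬝ᵥ y = euclNorm y ^ 2 := by
  rw [euclNorm, Real.sq_sqrt (by positivity)]
  simp [dotProduct, sq]

/-- Relative-error bound for solving the regularized system
with an approximation `Â ⪯ A`: `‖x̂ − x⋆‖₂/‖x⋆‖₂ ≤ ‖E‖/μ`. -/
theorem sketch_and_solve_relative_error {n : ℕ}
    (A Ahat : Matrix (Fin n) (Fin n) ℝ)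
    (hA : A.PosSemidef) (hAhat : Ahat.PosSemidef)
    (hE : (A - Ahat).PosSemidef)
    (μ : ℝ) (hμ : 0 < μ)
    (b : Fin n → ℝ) (hb : b ≠ 0) :
    euclNorm ((Ahat + μ • (1 : Matrix (Fin n) (Fin n) ℝ))⁻¹.mulVec b
        - (A + μ • (1 : Matrix (Fin n) (Fin n) ℝ))⁻¹.mulVec b)
      / euclNorm ((A + μ • (1 : Matrix (Fin n) (Fin n) ℝ))⁻¹.mulVec b)
      ≤ specNorm (A - Ahat) / μ := by
  
  have hsm : (μ • (1 : Matrix (Fin n) (Fin n) ℝ)).PosDef := by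
    have : μ • (1 : Matrix (Fin n) (Fin n) ℝ) = Matrix.diagonal (fun _ => μ) := by
      ext i j
      simp [Matrix.one_apply, Matrix.diagonal_apply, mul_ite]
    rw [this]
    exact Matrix.PosDef.diagonal (fun _ => hμ)
  set M := A + μ • (1 : Matrix (Fin n) (Fin n) ℝ) with hM
  set Mh := Ahat + μ • (1 : Matrix (Fin n) (Fin n) ℝ) with hMh
  have hMpd : M.PosDef := Matrix.PosDef.posSemidef_add hA hsm
  have hMhpd : Mh.PosDef := Matrix.PosDef.posSemidef_add hAhat hsm
  have : Invertible M := hMpd.isUnit.invertible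
  have : Invertible Mh := hMhpd.isUnit.invertible
  set xs := M⁻¹ *ᵥ b with hxs
  set xh := Mh⁻¹ *ᵥ b with hxh
  have hMxs : M *ᵥ xs = b := by
    rw [hxs, Matrix.mulVec_mulVec, Matrix.mul_inv_of_invertible, Matrix.one_mulVec]
  have hMhxh : Mh *ᵥ xh = b := by
    rw [hxh, Matrix.mulVec_mulVec, Matrix.mul_inv_of_invertible, Matrix.one_mulVec]
  set y := xh - xs with hy
  have hMy : Mh *ᵥ y = (A - Ahat) *ᵥ xs := by
    rw [hy, Matrix.mulVec_sub, hMhxh, ← hMxs, ← Matrix.sub_mulVec]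
    congr 1
    rw [hM, hMh]
    abel
  -- quadratic lower bound
  have hquad : μ * euclNorm y ^ 2 ≤ y ⬝ᵥ (Mh *ᵥ y) := by
    rw [hMh, Matrix.add_mulVec, dotProduct_add]
    have h1 : 0 ≤ y ⬝ᵥ (Ahat *ᵥ y) := by
      have := hAhat.dotProduct_mulVec_nonneg y
      simpa using this
    have h2 : y ⬝ᵥ ((μ • (1 : Matrix (Fin n) (Fin n) ℝ)) *ᵥ y) = μ * euclNorm y ^ 2 := by
      rw [Matrix.smul_mulVec, Matrix.one_mulVec, dotProduct_smul, smul_eq_mul,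
        dotProduct_self_eq]
    linarith
  have hylb : euclNorm y ≤ (1 / μ) * euclNorm (Mh *ᵥ y) := by
    rcases eq_or_ne y 0 with h0 | h0
    · simp [h0, euclNorm]
    · have hypos : 0 < euclNorm y := euclNorm_pos h0
      have := le_trans hquad (dotProduct_le y (Mh *ᵥ y))
      rw [one_div, le_inv_mul_iff₀ hμ]
      nlinarith [this, hypos]
  have hxsne : xs ≠ 0 := by
    intro h
    apply hb
    rw [← hMxs, h, Matrix.mulVec_zero]
  have hxspos : 0 < euclNorm xs := euclNorm_pos hxsne
  have key : euclNorm y ≤ (specNorm (A - Ahat) / μ) * euclNorm xs := by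
    calc euclNorm y ≤ (1 / μ) * euclNorm (Mh *ᵥ y) := hylb
      _ = (1 / μ) * euclNorm ((A - Ahat) *ᵥ xs) := by rw [hMy]
      _ ≤ (1 / μ) * (specNorm (A - Ahat) * euclNorm xs) := by
          apply mul_le_mul_of_nonneg_left (euclNorm_mulVec_le _ _)
          positivity
      _ = (specNorm (A - Ahat) / μ) * euclNorm xs := by ring
  rw [div_le_iff₀ hxspos]
  exact key
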